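/- Any scaling factors (u*, v*) with π* = (u*⊗v*)·K, where π* is the unique minimizer of KL(·|K) over Π(μ̂,ν̂), satisfy: u* ∈ L^∞₊(X,μ), v* ∈ L^∞₊(Y,ν), ‖u*‖_{L¹(X,μ)} > 0, ‖v*‖_{L¹(Y,ν)} > 0; for μ-a.e. x ∈ X, (1/‖v*‖_{L¹(Y,ν)})·dμ̂/dμ(x) ≤ u*(x) ≤ (exp(‖c‖_∞/ε)/‖v*‖_{L¹(Y,ν)})·dμ̂/dμ(x); for ν-a.e. y ∈ Y, (1/‖u*‖_{L¹(X,μ)})·dν̂/dν(y) ≤ v*(y) ≤ (exp(‖c‖_∞/ε)/‖u*‖_{L¹(X,μ)})·dν̂/dν(y); and log u* ∈ L¹(X,μ̂), log v* ∈ L¹(Y,ν̂). -/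

import Mathlib

open MeasureTheory ENNReal Filter Topology

noncomputable section

/-- `phi s = s * log s - s + 1` (note `phi 0 = 1` since `Real.log 0 = 0`);
this is the integrand of the Kullback--Leibler divergence. -/
def phi (s : ℝ) : ℝ := s * Real.log s - s + 1

open Classical in
/-- Kullback--Leibler divergence `KL(ρ|σ) ∈ [0,∞]`: `∫ phi (dρ/dσ) dσ` if `ρ ≪ σ`,
and `∞` otherwise (nonnegativity of `ρ` is automatic for measures). -/
def KL {Z : Type*} [MeasurableSpace Z] (ρ σ : Measure Z) : ℝ≥0∞ :=
  if ρ ≪ σ then ∫⁻ z, ENNReal.ofReal (phi ((ρ.rnDeriv σ) z).toReal) ∂σ else ⊤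

/-- The set `Π(μh, νh)` of transport plans with marginals `μh` and `νh`. -/
def Coupling {X Y : Type*} [MeasurableSpace X] [MeasurableSpace Y]
    (μh : Measure X) (νh : Measure Y) : Set (Measure (X × Y)) :=
  {π | π.map Prod.fst = μh ∧ π.map Prod.snd = νh}

/-- The Gibbs kernel measure `K = exp(-c/ε) ⋅ (μ ⊗ ν)`. -/
def Kmeas {X Y : Type*} [MeasurableSpace X] [MeasurableSpace Y]
    (μ : Measure X) (ν : Measure Y) [SFinite ν] (c : X × Y → ℝ) (ε : ℝ) : Measure (X × Y) :=
  (μ.prod ν).withDensity fun p => ENNReal.ofReal (Real.exp (-c p / ε))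

/-- The product density `(u ⊗ v)(x,y) = u x * v y`, as an `ℝ≥0∞`-valued density. -/
def prodDensity {X Y : Type*} (u : X → ℝ) (v : Y → ℝ) : X × Y → ℝ≥0∞ :=
  fun p => ENNReal.ofReal (u p.1 * v p.2)

/-- `L^∞₊(μ)`: measurable, a.e. nonnegative, essentially bounded functions. -/
def LinftyPlus {Z : Type*} [MeasurableSpace Z] (μ : Measure Z) (u : Z → ℝ) : Prop :=
  Measurable u ∧ (∀ᵐ z ∂μ, 0 ≤ u z) ∧ ∃ C : ℝ, ∀ᵐ z ∂μ, u z ≤ C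


lemma map_fst_withDensity_prod {X Y : Type*} [MeasurableSpace X] [MeasurableSpace Y]
    (μ : Measure X) (ν : Measure Y) [SFinite μ] [SFinite ν]
    {F : X × Y → ℝ≥0∞} (hF : Measurable F) :
    ((μ.prod ν).withDensity F).map Prod.fst
      = μ.withDensity (fun x => ∫⁻ y, F (x, y) ∂ν) := by
  ext s hs
  rw [Measure.map_apply measurable_fst hs, withDensity_apply _ (measurable_fst hs),
    withDensity_apply _ hs]
  have h1 : Prod.fst ⁻¹' s = s ×ˢ (Set.univ : Set Y) := by ext p; simp
  rw [h1, ← Measure.prod_restrict, Measure.restrict_univ,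
    lintegral_prod _ hF.aemeasurable]

lemma map_snd_withDensity_prod {X Y : Type*} [MeasurableSpace X] [MeasurableSpace Y]
    (μ : Measure X) (ν : Measure Y) [SFinite μ] [SFinite ν]
    {F : X × Y → ℝ≥0∞} (hF : Measurable F) :
    ((μ.prod ν).withDensity F).map Prod.snd
      = ν.withDensity (fun y => ∫⁻ x, F (x, y) ∂μ) := by
  ext s hs
  rw [Measure.map_apply measurable_snd hs, withDensity_apply _ (measurable_snd hs),
    withDensity_apply _ hs]
  have h1 : Prod.snd ⁻¹' s = (Set.univ : Set X) ×ˢ s := by ext p; simp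
  rw [h1, ← Measure.prod_restrict, Measure.restrict_univ,
    lintegral_prod_symm _ hF.aemeasurable]

lemma Jfacts {X Y : Type*} [MeasurableSpace X] [MeasurableSpace Y]
    (μ : Measure X) (ν : Measure Y) [SigmaFinite μ] [SFinite ν]
    (c : X → Y → ℝ) (hc : Measurable (Function.uncurry c)) (cmax : ℝ)
    (hc0 : ∀ x y, 0 ≤ c x y) (hcmax : ∀ x y, c x y ≤ cmax) (ε : ℝ) (hε : 0 < ε)
    (μh : Measure X) (hposmass : 0 < μh Set.univ)
    (C : ℝ≥0∞) (hCtop : C ≠ ⊤) (hC : ∀ᵐ x ∂μ, μh.rnDeriv μ x ≤ C)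
    (u : X → ℝ) (v : Y → ℝ) (hu : Measurable u) (hv : Measurable v)
    (hmarg : μ.withDensity (fun x => ENNReal.ofReal (u x) *
        ∫⁻ y, ENNReal.ofReal (Real.exp (-c x y / ε)) * ENNReal.ofReal (v y) ∂ν) = μh) :
    (∫⁻ y, ENNReal.ofReal (v y) ∂ν ≠ 0) ∧ (∫⁻ y, ENNReal.ofReal (v y) ∂ν ≠ ⊤) := by
  set I : X → ℝ≥0∞ := fun x => ∫⁻ y, ENNReal.ofReal (Real.exp (-c x y / ε)) * ENNReal.ofReal (v y) ∂ν with hI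
  set J : ℝ≥0∞ := ∫⁻ y, ENNReal.ofReal (v y) ∂ν with hJ
  have hEVmeas : Measurable (fun p : X × Y =>
      ENNReal.ofReal (Real.exp (-c p.1 p.2 / ε)) * ENNReal.ofReal (v p.2)) :=
    (((hc.neg.div_const ε).exp).ennreal_ofReal).mul ((hv.comp measurable_snd).ennreal_ofReal)
  have hImeas : Measurable I := Measurable.lintegral_prod_right hEVmeas
  have hgmeas : Measurable (fun x => ENNReal.ofReal (u x) * I x) :=
    hu.ennreal_ofReal.mul hImeas
  have hrn : μh.rnDeriv μ =ᵐ[μ] (fun x => ENNReal.ofReal (u x) * I x) := by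
    rw [← hmarg]; exact Measure.rnDeriv_withDensity μ hgmeas
  have hIle : ∀ x, I x ≤ J := by
    intro x
    refine le_trans (lintegral_mono fun y => ?_) le_rfl
    calc ENNReal.ofReal (Real.exp (-c x y / ε)) * ENNReal.ofReal (v y)
        ≤ 1 * ENNReal.ofReal (v y) := by
          refine mul_le_mul' (ofReal_le_one.mpr (Real.exp_le_one_iff.mpr ?_)) le_rfl
          exact div_nonpos_of_nonpos_of_nonneg (neg_nonpos.mpr (hc0 x y)) hε.le
      _ = ENNReal.ofReal (v y) := one_mul _
  have ha : (0:ℝ) < Real.exp (-cmax / ε) := Real.exp_pos _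
  have hIge : ∀ x, ENNReal.ofReal (Real.exp (-cmax / ε)) * J ≤ I x := by
    intro x
    rw [hJ, ← lintegral_const_mul _ hv.ennreal_ofReal]
    refine lintegral_mono fun y => ?_
    refine mul_le_mul' (ofReal_le_ofReal (Real.exp_le_exp.mpr ?_)) le_rfl
    gcongr
    exact hcmax x y
  constructor
  · intro hJ0
    have hI0 : ∀ x, I x = 0 := fun x => le_antisymm (hJ0 ▸ hIle x) zero_le
    have h0 : μh = 0 := by
      rw [← hmarg, withDensity_congr_ae (g := 0) (Filter.Eventually.of_forall fun x => by
        simp only [Pi.zero_apply, mul_eq_zero]; exact Or.inr (hI0 x)), withDensity_zero]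
    rw [h0] at hposmass; simp at hposmass
  · intro hJt
    have hIt : ∀ x, I x = ⊤ := by
      intro x
      refine top_le_iff.mp ?_
      calc (⊤ : ℝ≥0∞) = ENNReal.ofReal (Real.exp (-cmax / ε)) * ⊤ :=
            (ENNReal.mul_top (by simpa using (ENNReal.ofReal_pos.mpr ha).ne')).symm
        _ = ENNReal.ofReal (Real.exp (-cmax / ε)) * J := by rw [hJt]
        _ ≤ I x := hIge x
    have hu0ae : ∀ᵐ x ∂μ, ENNReal.ofReal (u x) = 0 := by
      filter_upwards [hrn, hC] with x h1 h2
      by_contra hne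
      have hgx : ENNReal.ofReal (u x) * I x = ⊤ := by rw [hIt x, ENNReal.mul_top hne]
      rw [h1, hgx] at h2
      exact hCtop (top_le_iff.mp h2)
    have h0 : μh = 0 := by
      rw [← hmarg, withDensity_congr_ae (g := 0) (by
        filter_upwards [hu0ae] with x hx; simp [hx]), withDensity_zero]
    rw [h0] at hposmass; simp at hposmass

lemma side_master {X Y : Type*} [MeasurableSpace X] [MeasurableSpace Y]
    (μ : Measure X) (ν : Measure Y) [IsProbabilityMeasure μ] [SFinite ν]
    (c : X → Y → ℝ) (hc : Measurable (Function.uncurry c)) (cmax : ℝ)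
    (hc0 : ∀ x y, 0 ≤ c x y) (hcmax : ∀ x y, c x y ≤ cmax) (ε : ℝ) (hε : 0 < ε)
    (μh : Measure X)
    (C : ℝ≥0∞) (hCtop : C ≠ ⊤) (hC : ∀ᵐ x ∂μ, μh.rnDeriv μ x ≤ C)
    (u : X → ℝ) (v : Y → ℝ) (hu : Measurable u) (hv : Measurable v)
    (hu0 : ∀ x, 0 ≤ u x) (hv0 : ∀ y, 0 ≤ v y)
    (hJ0 : ∫⁻ y, ENNReal.ofReal (v y) ∂ν ≠ 0)
    (hJtop : ∫⁻ y, ENNReal.ofReal (v y) ∂ν ≠ ⊤)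
    (hmarg : μ.withDensity (fun x => ENNReal.ofReal (u x) *
        ∫⁻ y, ENNReal.ofReal (Real.exp (-c x y / ε)) * ENNReal.ofReal (v y) ∂ν) = μh) :
    (∃ C' : ℝ, ∀ᵐ x ∂μ, u x ≤ C') ∧
    (∀ᵐ x ∂μ, (1 / ∫ y, v y ∂ν) * (μh.rnDeriv μ x).toReal ≤ u x ∧
      u x ≤ (Real.exp (cmax / ε) / ∫ y, v y ∂ν) * (μh.rnDeriv μ x).toReal) ∧
    Integrable (fun x => Real.log (u x)) μh := by
  set I : X → ℝ≥0∞ := fun x => ∫⁻ y, ENNReal.ofReal (Real.exp (-c x y / ε)) * ENNReal.ofReal (v y) ∂ν with hI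
  set J : ℝ≥0∞ := ∫⁻ y, ENNReal.ofReal (v y) ∂ν with hJ
  have hEVmeas : Measurable (fun p : X × Y =>
      ENNReal.ofReal (Real.exp (-c p.1 p.2 / ε)) * ENNReal.ofReal (v p.2)) :=
    (((hc.neg.div_const ε).exp).ennreal_ofReal).mul ((hv.comp measurable_snd).ennreal_ofReal)
  have hImeas : Measurable I := Measurable.lintegral_prod_right hEVmeas
  have hgmeas : Measurable (fun x => ENNReal.ofReal (u x) * I x) :=
    hu.ennreal_ofReal.mul hImeas
  have hrn : μh.rnDeriv μ =ᵐ[μ] (fun x => ENNReal.ofReal (u x) * I x) := by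
    rw [← hmarg]; exact Measure.rnDeriv_withDensity μ hgmeas
  have hIle : ∀ x, I x ≤ J := by
    intro x
    refine lintegral_mono fun y => ?_
    calc ENNReal.ofReal (Real.exp (-c x y / ε)) * ENNReal.ofReal (v y)
        ≤ 1 * ENNReal.ofReal (v y) := by
          refine mul_le_mul' (ofReal_le_one.mpr (Real.exp_le_one_iff.mpr ?_)) le_rfl
          exact div_nonpos_of_nonpos_of_nonneg (neg_nonpos.mpr (hc0 x y)) hε.le
      _ = ENNReal.ofReal (v y) := one_mul _
  have ha : (0:ℝ) < Real.exp (-cmax / ε) := Real.exp_pos _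
  have hIge : ∀ x, ENNReal.ofReal (Real.exp (-cmax / ε)) * J ≤ I x := by
    intro x
    rw [hJ, ← lintegral_const_mul _ hv.ennreal_ofReal]
    refine lintegral_mono fun y => ?_
    refine mul_le_mul' (ofReal_le_ofReal (Real.exp_le_exp.mpr ?_)) le_rfl
    gcongr
    exact hcmax x y
  -- real quantities
  set Jr : ℝ := J.toReal with hJr'
  have hJr : 0 < Jr := ENNReal.toReal_pos hJ0 hJtop
  have hveq : ∫ y, v y ∂ν = Jr := by
    rw [integral_eq_lintegral_of_nonneg_ae (Filter.Eventually.of_forall hv0)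
      hv.aestronglyMeasurable, ← hJ]
  set a : ℝ := Real.exp (-cmax / ε) with ha'
  set b : ℝ := Real.exp (cmax / ε) with hb'
  have hb : (0:ℝ) < b := Real.exp_pos _
  have hab : a * b = 1 := by
    rw [ha', hb', ← Real.exp_add, show -cmax / ε + cmax / ε = 0 by ring, Real.exp_zero]
  -- the sandwich
  have hsand : ∀ᵐ x ∂μ, (1 / Jr) * (μh.rnDeriv μ x).toReal ≤ u x ∧
      u x ≤ (b / Jr) * (μh.rnDeriv μ x).toReal := by
    filter_upwards [hrn] with x h1
    have hIne : I x ≠ ⊤ := (lt_of_le_of_lt (hIle x) (lt_top_iff_ne_top.mpr hJtop)).ne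
    set i : ℝ := (I x).toReal with hi'
    have hi1 : i ≤ Jr := ENNReal.toReal_mono hJtop (hIle x)
    have hi2 : a * Jr ≤ i := by
      have := ENNReal.toReal_mono hIne (hIge x)
      rwa [ENNReal.toReal_mul, ENNReal.toReal_ofReal ha.le] at this
    have hf : (μh.rnDeriv μ x).toReal = u x * i := by
      rw [h1, ENNReal.toReal_mul, ENNReal.toReal_ofReal (hu0 x)]
    constructor
    · rw [hf, one_div, inv_mul_le_iff₀ hJr]
      calc u x * i ≤ u x * Jr := mul_le_mul_of_nonneg_left hi1 (hu0 x)
        _ = Jr * u x := mul_comm _ _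
    · rw [hf, div_mul_eq_mul_div, le_div_iff₀ hJr]
      calc u x * Jr = b * (u x * (a * Jr)) := by
            rw [show b * (u x * (a * Jr)) = (a * b) * (u x * Jr) by ring, hab, one_mul]
        _ ≤ b * (u x * i) :=
            mul_le_mul_of_nonneg_left (mul_le_mul_of_nonneg_left hi2 (hu0 x)) hb.le
  refine ⟨⟨(b / Jr) * C.toReal, ?_⟩, ?_, ?_⟩
  · filter_upwards [hsand, hC] with x hs h2
    refine hs.2.trans ?_
    have : (μh.rnDeriv μ x).toReal ≤ C.toReal := ENNReal.toReal_mono hCtop h2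
    exact mul_le_mul_of_nonneg_left this (by positivity)
  · rw [hveq]; exact hsand
  · -- integrability of log u
    have hglt : ∀ᵐ x ∂μ, ENNReal.ofReal (u x) * I x < ⊤ := by
      filter_upwards [hrn, hC] with x h1 h2
      rw [← h1]; exact lt_of_le_of_lt h2 (lt_top_iff_ne_top.mpr hCtop)
    rw [← hmarg, integrable_withDensity_iff hgmeas hglt]
    set Ct : ℝ := C.toReal with hCt'
    have hCt0 : 0 ≤ Ct := ENNReal.toReal_nonneg
    set D : ℝ := |Real.log Jr| + |cmax / ε| with hD'
    have hD0 : 0 ≤ D := by positivity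
    set M : ℝ := (1 + Ct * Ct) + D * Ct with hM'
    refine Integrable.mono' (integrable_const M)
      (((Real.measurable_log.comp hu).mul hgmeas.ennreal_toReal).aestronglyMeasurable) ?_
    filter_upwards [hsand, hrn, hC] with x hs h1 h2
    set f : ℝ := (μh.rnDeriv μ x).toReal with hf'
    have hgf : (ENNReal.ofReal (u x) * I x).toReal = f := by rw [hf', h1]
    rw [hgf]
    have hf0 : 0 ≤ f := ENNReal.toReal_nonneg
    have hfC : f ≤ Ct := ENNReal.toReal_mono hCtop h2
    rcases eq_or_lt_of_le hf0 with hfz | hfpos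
    · -- f = 0 forces u x = 0
      have hux : u x = 0 := le_antisymm (by have := hs.2; rw [← hfz] at this; simpa using this) (hu0 x)
      rw [hux, ← hfz]
      simp only [Real.log_zero, zero_mul, mul_zero, norm_zero]
      positivity
    · have hupos : 0 < u x := lt_of_lt_of_le (by positivity) hs.1
      have hlog_up : Real.log (u x) ≤ Real.log b + Real.log f - Real.log Jr := by
        have h := Real.log_le_log hupos hs.2
        rwa [div_mul_eq_mul_div, Real.log_div (by positivity) hJr.ne',
          Real.log_mul hb.ne' hfpos.ne'] at h
      have hlog_lo : Real.log f - Real.log Jr ≤ Real.log (u x) := by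
        have h := Real.log_le_log (by positivity) hs.1
        rw [one_div, Real.log_mul (inv_ne_zero hJr.ne') hfpos.ne', Real.log_inv] at h
        linarith
      have hlogb : Real.log b = cmax / ε := Real.log_exp _
      have habs : |Real.log (u x)| ≤ |Real.log f| + D := by
        rw [abs_le]
        constructor
        · have := neg_abs_le (Real.log f)
          have h2 := neg_abs_le (Real.log Jr)
          have h3 := le_abs_self (Real.log Jr)
          rw [hD']
          have h4 : (0:ℝ) ≤ |cmax / ε| := abs_nonneg _
          linarith
        · have h1 := le_abs_self (Real.log f)
          have h2 := neg_abs_le (Real.log Jr)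
          have h3 : Real.log b ≤ |cmax / ε| := by rw [hlogb]; exact le_abs_self _
          rw [hD']
          linarith
      have hflogf : f * |Real.log f| ≤ 1 + Ct * Ct := by
        rcases le_or_gt f 1 with hf1 | hf1
        · have hlf : Real.log f ≤ 0 := Real.log_nonpos hf0 hf1
          rw [abs_of_nonpos hlf]
          have h1f : (0:ℝ) < 1 / f := by positivity
          have h := Real.log_le_sub_one_of_pos h1f
          rw [one_div, Real.log_inv] at h
          have := mul_le_mul_of_nonneg_left h hf0
          have hfi : f * f⁻¹ = 1 := mul_inv_cancel₀ hfpos.ne'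
          nlinarith [mul_self_nonneg Ct]
        · have hlf : 0 ≤ Real.log f := Real.log_nonneg hf1.le
          rw [abs_of_nonneg hlf]
          have h := Real.log_le_sub_one_of_pos hfpos
          nlinarith
      have hDf : D * f ≤ D * Ct := mul_le_mul_of_nonneg_left hfC hD0
      have : ‖Real.log (u x) * f‖ = |Real.log (u x)| * f := by
        rw [Real.norm_eq_abs, abs_mul, abs_of_nonneg hf0]
      rw [this, hM']
      calc |Real.log (u x)| * f ≤ (|Real.log f| + D) * f :=
            mul_le_mul_of_nonneg_right habs hf0
        _ = f * |Real.log f| + D * f := by ring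
        _ ≤ (1 + Ct * Ct) + D * Ct := by linarith

/-- Proposition 2.4 (iv): bounds on the scaling factors of the
unique minimizer: essential boundedness, positive `L¹` norms, pointwise a.e.
sandwich bounds, and integrability of the logarithms. -/
theorem scaling_factor_bounds
    {X Y : Type*} [MetricSpace X] [CompactSpace X] [MeasurableSpace X] [BorelSpace X]
    [MetricSpace Y] [CompactSpace Y] [MeasurableSpace Y] [BorelSpace Y]
    (μ : Measure X) (ν : Measure Y) [IsProbabilityMeasure μ] [IsProbabilityMeasure ν]
    (c : X × Y → ℝ) (hc : Measurable c) (cmax : ℝ)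
    (hc0 : ∀ p, 0 ≤ c p) (hcmax : ∀ p, c p ≤ cmax)
    (ε : ℝ) (hε : 0 < ε)
    (μh : Measure X) (νh : Measure Y)
    (hμac : μh ≪ μ) (hνac : νh ≪ ν)
    (hmass : μh Set.univ = νh Set.univ) (hposmass : 0 < μh Set.univ)
    (hμbd : ∃ C : ℝ≥0∞, C ≠ ⊤ ∧ ∀ᵐ x ∂μ, μh.rnDeriv μ x ≤ C)
    (hνbd : ∃ C : ℝ≥0∞, C ≠ ⊤ ∧ ∀ᵐ y ∂ν, νh.rnDeriv ν y ≤ C)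
    (πopt : Measure (X × Y)) (hπopt : πopt ∈ Coupling μh νh)
    (hmin : ∀ π ∈ Coupling μh νh, KL πopt (Kmeas μ ν c ε) ≤ KL π (Kmeas μ ν c ε))
    (u : X → ℝ) (v : Y → ℝ) (hu : Measurable u) (hv : Measurable v)
    (hu0 : ∀ x, 0 ≤ u x) (hv0 : ∀ y, 0 ≤ v y)
    (hform : πopt = (Kmeas μ ν c ε).withDensity (prodDensity u v)) :
    ((∃ C : ℝ, ∀ᵐ x ∂μ, u x ≤ C) ∧ (∃ C : ℝ, ∀ᵐ y ∂ν, v y ≤ C)) ∧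
    (0 < ∫ x, u x ∂μ) ∧ (0 < ∫ y, v y ∂ν) ∧
    (∀ᵐ x ∂μ, (1 / ∫ y, v y ∂ν) * (μh.rnDeriv μ x).toReal ≤ u x ∧
      u x ≤ (Real.exp (cmax / ε) / ∫ y, v y ∂ν) * (μh.rnDeriv μ x).toReal) ∧
    (∀ᵐ y ∂ν, (1 / ∫ x, u x ∂μ) * (νh.rnDeriv ν y).toReal ≤ v y ∧
      v y ≤ (Real.exp (cmax / ε) / ∫ x, u x ∂μ) * (νh.rnDeriv ν y).toReal) ∧
    Integrable (fun x => Real.log (u x)) μh ∧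
    Integrable (fun y => Real.log (v y)) νh := by
  classical
  have hE : Measurable (fun p : X × Y => ENNReal.ofReal (Real.exp (-c p / ε))) :=
    ((hc.neg.div_const ε).exp).ennreal_ofReal
  have hG : Measurable (fun p : X × Y => ENNReal.ofReal (u p.1) * ENNReal.ofReal (v p.2)) :=
    ((hu.comp measurable_fst).ennreal_ofReal).mul ((hv.comp measurable_snd).ennreal_ofReal)
  set F : X × Y → ℝ≥0∞ := fun p => ENNReal.ofReal (Real.exp (-c p / ε)) *
    (ENNReal.ofReal (u p.1) * ENNReal.ofReal (v p.2)) with hF'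
  have hFmeas : Measurable F := hE.mul hG
  have hπF : πopt = (μ.prod ν).withDensity F := by
    rw [hform]
    simp only [Kmeas]
    rw [show prodDensity u v = fun p : X × Y => ENNReal.ofReal (u p.1) * ENNReal.ofReal (v p.2)
      from funext fun p => ENNReal.ofReal_mul (hu0 p.1), ← withDensity_mul _ hE hG]
    rfl
  have hmargX0 : μ.withDensity (fun x => ∫⁻ y, F (x, y) ∂ν) = μh := by
    rw [← map_fst_withDensity_prod μ ν hFmeas, ← hπF]; exact hπopt.1
  have hmargY0 : ν.withDensity (fun y => ∫⁻ x, F (x, y) ∂μ) = νh := by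
    rw [← map_snd_withDensity_prod μ ν hFmeas, ← hπF]; exact hπopt.2
  have hmargX : μ.withDensity (fun x => ENNReal.ofReal (u x) *
      ∫⁻ y, ENNReal.ofReal (Real.exp (-c (x, y) / ε)) * ENNReal.ofReal (v y) ∂ν) = μh := by
    rw [← hmargX0]
    refine withDensity_congr_ae (Filter.Eventually.of_forall fun x => ?_)
    have hmy : Measurable (fun y =>
        ENNReal.ofReal (Real.exp (-c (x, y) / ε)) * ENNReal.ofReal (v y)) :=
      ((((hc.comp measurable_prodMk_left).neg.div_const ε).exp).ennreal_ofReal).mul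
        hv.ennreal_ofReal
    beta_reduce
    rw [← lintegral_const_mul _ hmy]
    exact lintegral_congr fun y => by simp only [hF']; ring
  have hmargY : ν.withDensity (fun y => ENNReal.ofReal (v y) *
      ∫⁻ x, ENNReal.ofReal (Real.exp (-c (x, y) / ε)) * ENNReal.ofReal (u x) ∂μ) = νh := by
    rw [← hmargY0]
    refine withDensity_congr_ae (Filter.Eventually.of_forall fun y => ?_)
    have hmx : Measurable (fun x =>
        ENNReal.ofReal (Real.exp (-c (x, y) / ε)) * ENNReal.ofReal (u x)) :=
      ((((hc.comp measurable_prodMk_right).neg.div_const ε).exp).ennreal_ofReal).mul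
        hu.ennreal_ofReal
    beta_reduce
    rw [← lintegral_const_mul _ hmx]
    exact lintegral_congr fun x => by simp only [hF']; ring
  obtain ⟨Cx, hCxt, hCx⟩ := hμbd
  obtain ⟨Cy, hCyt, hCy⟩ := hνbd
  have hposY : 0 < νh Set.univ := hmass ▸ hposmass
  have hcX : Measurable (Function.uncurry fun x y => c (x, y)) := hc
  have hcY : Measurable (Function.uncurry fun y x => c (x, y)) := hc.comp measurable_swap
  have JfX := Jfacts μ ν (fun x y => c (x, y)) hcX cmax (fun x y => hc0 (x, y))
    (fun x y => hcmax (x, y)) ε hε μh hposmass Cx hCxt hCx u v hu hv hmargX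
  have JfY := Jfacts ν μ (fun y x => c (x, y)) hcY cmax (fun y x => hc0 (x, y))
    (fun y x => hcmax (x, y)) ε hε νh hposY Cy hCyt hCy v u hv hu hmargY
  have MX := side_master μ ν (fun x y => c (x, y)) hcX cmax (fun x y => hc0 (x, y))
    (fun x y => hcmax (x, y)) ε hε μh Cx hCxt hCx u v hu hv hu0 hv0 JfX.1 JfX.2 hmargX
  have MY := side_master ν μ (fun y x => c (x, y)) hcY cmax (fun y x => hc0 (x, y))
    (fun y x => hcmax (x, y)) ε hε νh Cy hCyt hCy v u hv hu hv0 hu0 JfY.1 JfY.2 hmargY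
  have hIntU : ∫ x, u x ∂μ = (∫⁻ x, ENNReal.ofReal (u x) ∂μ).toReal :=
    integral_eq_lintegral_of_nonneg_ae (Filter.Eventually.of_forall hu0)
      hu.aestronglyMeasurable
  have hIntV : ∫ y, v y ∂ν = (∫⁻ y, ENNReal.ofReal (v y) ∂ν).toReal :=
    integral_eq_lintegral_of_nonneg_ae (Filter.Eventually.of_forall hv0)
      hv.aestronglyMeasurable
  refine ⟨⟨MX.1, MY.1⟩, ?_, ?_, MX.2.1, MY.2.1, MX.2.2, MY.2.2⟩
  · rw [hIntU]; exact ENNReal.toReal_pos JfY.1 JfY.2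
  · rw [hIntV]; exact ENNReal.toReal_pos JfX.1 JfX.2
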